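/- Let x_1,...,x_d be vectors in a Hilbert space H with positive definite Gram matrix Σ. For disjoint A, S, B ⊆ [d], P_A (I − P_S) P_B = 0 holds if and only if Σ_{B,A} − Σ_{B,S} Σ_S^{-1} Σ_{S,A} = 0, where Σ_{B,A} denotes the submatrix of Σ with rows in B and columns in A (and the condition is Σ_{B,A} = 0 when S = ∅). -/

import Mathlib

private lemma aux_sum_extend {d : ℕ} (S : Finset (Fin d)) (f : Fin d → ℝ) (v : S → ℝ) :
    ∑ i : Fin d, f i * (if h : i ∈ S then v ⟨i, h⟩ else 0) = ∑ s : S, f s * v s := by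
  classical
  calc ∑ i : Fin d, f i * (if h : i ∈ S then v ⟨i, h⟩ else 0)
      = ∑ i ∈ S, f i * (if h : i ∈ S then v ⟨i, h⟩ else 0) :=
        (Finset.sum_subset (Finset.subset_univ S)
          (fun i _ hi => by rw [dif_neg hi, mul_zero])).symm
    _ = ∑ s ∈ S.attach, f ↑s * (if h : (s : Fin d) ∈ S then v ⟨s, h⟩ else 0) :=
        (Finset.sum_attach _ _).symm
    _ = ∑ s : S, f s * v s := by
        rw [Finset.univ_eq_attach]
        exact Finset.sum_congr rfl fun s _ => by rw [dif_pos s.2]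

theorem stmt_10 {H : Type*} [NormedAddCommGroup H] [InnerProductSpace ℝ H] [CompleteSpace H]
    {d : ℕ} (x : Fin d → H)
    (hGram : (Matrix.of fun (i j : Fin d) => (inner ℝ (x i) (x j) : ℝ)).PosDef)
    (P : Finset (Fin d) → H →L[ℝ] H)
    (hsa : ∀ A, IsSelfAdjoint (P A))
    (hidem : ∀ A, P A * P A = P A)
    (hrange : ∀ A : Finset (Fin d), LinearMap.range (P A : H →ₗ[ℝ] H) = Submodule.span ℝ (x '' ↑A))
    (A S B : Finset (Fin d))
    (hAS : Disjoint A S) (hAB : Disjoint A B) (hSB : Disjoint S B) :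
    P A * (1 - P S) * P B = 0 ↔
      ∀ b ∈ B, ∀ a ∈ A,
        (inner ℝ (x b) (x a) : ℝ) -
          ∑ s : S, ∑ t : S,
            (inner ℝ (x b) (x s) : ℝ) *
              ((Matrix.of fun (s t : S) => (inner ℝ (x (s : Fin d)) (x (t : Fin d)) : ℝ))⁻¹ s t) *
              (inner ℝ (x t) (x a) : ℝ) = 0 := by
  classical
  set G : Matrix S S ℝ :=
    Matrix.of fun (s t : S) => (inner ℝ (x (s : Fin d)) (x (t : Fin d)) : ℝ) with hGdef
  -- G is positive definite
  have hGpd : G.PosDef := by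
    refine Matrix.PosDef.of_dotProduct_mulVec_pos ?_ ?_
    · ext s t
      simp only [Matrix.conjTranspose_apply, Matrix.of_apply, star_trivial, hGdef]
      exact real_inner_comm _ _
    · intro v hv
      set w : Fin d → ℝ := fun i => if h : i ∈ S then v ⟨i, h⟩ else 0 with hw
      have hw0 : w ≠ 0 := by
        intro h
        apply hv
        funext s
        have := congrFun h (s : Fin d)
        simpa [hw, s.2] using this
      have hpos := hGram.dotProduct_mulVec_pos hw0
      have hmv : ∀ i : Fin d,
          ((Matrix.of fun (i j : Fin d) => (inner ℝ (x i) (x j) : ℝ)).mulVec w) i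
            = ∑ t : S, (inner ℝ (x i) (x (t : Fin d)) : ℝ) * v t := by
        intro i
        simp only [Matrix.mulVec, dotProduct, Matrix.of_apply, hw]
        exact aux_sum_extend S (fun j => (inner ℝ (x i) (x j) : ℝ)) v
      have hlhs : dotProduct (star w)
          ((Matrix.of fun (i j : Fin d) => (inner ℝ (x i) (x j) : ℝ)).mulVec w)
          = dotProduct (star v) (G.mulVec v) := by
        simp only [dotProduct, star_trivial, Pi.star_apply]
        calc ∑ i : Fin d, w i *
              ((Matrix.of fun (i j : Fin d) => (inner ℝ (x i) (x j) : ℝ)).mulVec w) i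
            = ∑ i : Fin d,
              ((Matrix.of fun (i j : Fin d) => (inner ℝ (x i) (x j) : ℝ)).mulVec w) i * w i := by
              exact Finset.sum_congr rfl fun i _ => mul_comm _ _
          _ = ∑ s : S,
              ((Matrix.of fun (i j : Fin d) => (inner ℝ (x i) (x j) : ℝ)).mulVec w) (s : Fin d)
                * v s := by
              exact aux_sum_extend S _ v
          _ = ∑ s : S, (G.mulVec v) s * v s := by
              refine Finset.sum_congr rfl fun s _ => ?_
              rw [hmv]
              congr 1
          _ = ∑ s : S, v s * (G.mulVec v) s :=
              Finset.sum_congr rfl fun s _ => mul_comm _ _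
      rw [← hlhs]
      exact hpos
  have hinvG : G⁻¹ * G = 1 := Matrix.nonsing_inv_mul G hGpd.det_pos.ne'.isUnit
  have hGsymm : ∀ s t : S, G⁻¹ s t = G⁻¹ t s := by
    intro s t
    have h := hGpd.isHermitian.inv.apply t s
    simpa using h
  -- P C fixes x i for i ∈ C
  have hfix : ∀ (C : Finset (Fin d)) (i : Fin d), i ∈ C → P C (x i) = x i := by
    intro C i hi
    have hx : x i ∈ LinearMap.range (P C : H →ₗ[ℝ] H) := by
      rw [hrange]
      exact Submodule.subset_span ⟨i, hi, rfl⟩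
    obtain ⟨w, hwP⟩ := hx
    replace hwP : P C w = x i := hwP
    calc P C (x i) = P C (P C w) := by rw [hwP]
      _ = (P C * P C) w := rfl
      _ = P C w := by rw [hidem C]
      _ = x i := hwP
  -- self-adjointness in inner-product form
  have hinner : ∀ (C : Finset (Fin d)) (u v : H),
      (inner ℝ (P C u) v : ℝ) = inner ℝ u (P C v) := by
    intro C u v
    calc (inner ℝ (P C u) v : ℝ)
        = inner ℝ ((ContinuousLinearMap.adjoint (P C)) u) v := by
          rw [← ContinuousLinearMap.star_eq_adjoint, (hsa C).star_eq]
      _ = inner ℝ u (P C v) := ContinuousLinearMap.adjoint_inner_left _ _ _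
  -- key formula for the projection onto span S
  have hPS : ∀ b a : Fin d, (inner ℝ (x a) (P S (x b)) : ℝ) =
      ∑ s : S, ∑ t : S,
        (inner ℝ (x b) (x (s : Fin d)) : ℝ) * (G⁻¹ s t) *
          (inner ℝ (x (t : Fin d)) (x a) : ℝ) := by
    intro b a
    have hmem : P S (x b) ∈ Submodule.span ℝ (x '' ↑S) := by
      rw [← hrange]
      exact ⟨x b, rfl⟩
    have himg : x '' ↑S = Set.range (fun s : S => x (s : Fin d)) := by
      ext y
      simp [Set.mem_image, Set.mem_range, Subtype.exists]
    rw [himg] at hmem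
    obtain ⟨c, hc⟩ := (Submodule.mem_span_range_iff_exists_fun ℝ).mp hmem
    have hperp : ∀ t : S, (inner ℝ (x (t : Fin d)) (P S (x b)) : ℝ)
        = inner ℝ (x (t : Fin d)) (x b) := by
      intro t
      have h1 : P S (x b - P S (x b)) = 0 := by
        rw [map_sub]
        have : P S (P S (x b)) = P S (x b) := by
          calc P S (P S (x b)) = (P S * P S) (x b) := rfl
            _ = P S (x b) := by rw [hidem S]
        rw [this, sub_self]
      have h2 : (inner ℝ (x (t : Fin d)) (x b - P S (x b)) : ℝ) = 0 := by
        rw [← hfix S t t.2, hinner S, h1, inner_zero_right]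
      rw [inner_sub_right] at h2
      linarith
    have hsolve : G.mulVec c = fun t : S => (inner ℝ (x (t : Fin d)) (x b) : ℝ) := by
      funext t
      calc (G.mulVec c) t = ∑ s : S, (inner ℝ (x (t : Fin d)) (x (s : Fin d)) : ℝ) * c s := by
            simp [Matrix.mulVec, dotProduct, hGdef]
        _ = inner ℝ (x (t : Fin d)) (∑ s : S, c s • x (s : Fin d)) := by
            rw [inner_sum]
            exact Finset.sum_congr rfl fun s _ => by
              rw [real_inner_smul_right]; ring
        _ = inner ℝ (x (t : Fin d)) (P S (x b)) := by rw [hc]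
        _ = inner ℝ (x (t : Fin d)) (x b) := hperp t
    have hc2 : c = G⁻¹.mulVec (fun t : S => (inner ℝ (x (t : Fin d)) (x b) : ℝ)) := by
      rw [← hsolve, Matrix.mulVec_mulVec, hinvG, Matrix.one_mulVec]
    calc (inner ℝ (x a) (P S (x b)) : ℝ)
        = inner ℝ (x a) (∑ s : S, c s • x (s : Fin d)) := by rw [hc]
      _ = ∑ s : S, c s * inner ℝ (x a) (x (s : Fin d)) := by
          rw [inner_sum]
          exact Finset.sum_congr rfl fun s _ => real_inner_smul_right _ _ _
      _ = ∑ s : S, (∑ t : S, G⁻¹ s t * (inner ℝ (x (t : Fin d)) (x b) : ℝ))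
            * inner ℝ (x a) (x (s : Fin d)) := by
          refine Finset.sum_congr rfl fun s _ => ?_
          rw [hc2]
          simp [Matrix.mulVec, dotProduct]
      _ = ∑ s : S, ∑ t : S, G⁻¹ s t * (inner ℝ (x (t : Fin d)) (x b) : ℝ)
            * inner ℝ (x a) (x (s : Fin d)) := by
          refine Finset.sum_congr rfl fun s _ => ?_
          rw [Finset.sum_mul]
      _ = ∑ s : S, ∑ t : S,
            (inner ℝ (x b) (x (s : Fin d)) : ℝ) * (G⁻¹ s t) *
              (inner ℝ (x (t : Fin d)) (x a) : ℝ) := by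
          rw [Finset.sum_comm]
          refine Finset.sum_congr rfl fun s _ => Finset.sum_congr rfl fun t _ => ?_
          rw [hGsymm t s, real_inner_comm (x (s : Fin d)) (x b),
            real_inner_comm (x a) (x (t : Fin d))]
          ring
  constructor
  · intro h b hb a ha
    have happ : P A (x b - P S (x b)) = 0 := by
      have h0 := congrFun (congrArg DFunLike.coe h) (x b)
      simpa [ContinuousLinearMap.mul_apply, ContinuousLinearMap.sub_apply,
        ContinuousLinearMap.one_apply, hfix B b hb, map_sub] using h0
    have h0 : (inner ℝ (x a) (x b - P S (x b)) : ℝ) = 0 := by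
      rw [← hfix A a ha, hinner A, happ, inner_zero_right]
    rw [inner_sub_right, hPS b a] at h0
    linarith [real_inner_comm (x a) (x b)]
  · intro h
    have hker : ∀ b ∈ B, (P A * (1 - P S)) (x b) = 0 := by
      intro b hb
      have h0 : ∀ a ∈ A, (inner ℝ (x a) (x b - P S (x b)) : ℝ) = 0 := by
        intro a ha
        have hba := h b hb a ha
        rw [inner_sub_right, hPS b a]
        linarith [real_inner_comm (x a) (x b)]
      set u := x b - P S (x b) with hu
      have huperp : ∀ v ∈ Submodule.span ℝ (x '' ↑A), (inner ℝ u v : ℝ) = 0 := by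
        intro v hv
        induction hv using Submodule.span_induction with
        | mem y hy =>
          obtain ⟨a, ha, rfl⟩ := hy
          rw [real_inner_comm]
          exact h0 a ha
        | zero => exact inner_zero_right u
        | add y z _ _ hy hz => rw [inner_add_right, hy, hz, add_zero]
        | smul r y _ hy => rw [real_inner_smul_right, hy, mul_zero]
      have hPAu : P A u = 0 := by
        have hm : P A u ∈ Submodule.span ℝ (x '' ↑A) := by
          rw [← hrange]
          exact ⟨u, rfl⟩
        have hself : (inner ℝ (P A u) (P A u) : ℝ) = 0 := by
          have hPP : P A (P A u) = P A u := by
            calc P A (P A u) = (P A * P A) u := rfl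
              _ = P A u := by rw [hidem A]
          rw [hinner A, hPP]
          exact huperp _ hm
        exact inner_self_eq_zero.mp hself
      show P A ((1 - P S) (x b)) = 0
      simpa [ContinuousLinearMap.sub_apply, ContinuousLinearMap.one_apply, hu] using hPAu
    have hker2 : Submodule.span ℝ (x '' ↑B) ≤
        LinearMap.ker ((P A * (1 - P S)) : H →ₗ[ℝ] H) := by
      rw [Submodule.span_le]
      rintro y ⟨b, hb, rfl⟩
      exact hker b hb
    ext v
    have hv : P B v ∈ Submodule.span ℝ (x '' ↑B) := by
      rw [← hrange]
      exact ⟨v, rfl⟩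
    have hz := hker2 hv
    rw [LinearMap.mem_ker] at hz
    show (P A * (1 - P S)) (P B v) = 0
    exact hz
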